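/- Let λ > 0 and define h_λ on ℓ²(ℤ) by (h_λ f)(x) = (f(x-1)+f(x+1))/2 + λ δ_{x0} f(0). Then the function f_λ(x) = e^{-α_λ|x|}/ν_λ with α_λ = log(√(1+λ²)+λ) satisfies h_λ f_λ = √(1+λ²) · f_λ. -/
import Mathlib


noncomputable def eigenfun (lam : ℝ) (x : ℤ) : ℝ :=
  Real.exp (-(Real.log (Real.sqrt (1 + lam ^ 2) + lam)) * |x|) /
    Real.sqrt (Real.sqrt (1 + lam ^ 2) / lam)

theorem magnetic_eigenvalue_equation (lam : ℝ) (hlam : 0 < lam) (x : ℤ) :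
    (eigenfun lam (x - 1) + eigenfun lam (x + 1)) / 2 +
      lam * (if x = 0 then eigenfun lam 0 else 0) =
    Real.sqrt (1 + lam ^ 2) * eigenfun lam x := by
  unfold eigenfun
  set s := Real.sqrt (1 + lam ^ 2) with hs
  have hs2 : s ^ 2 = 1 + lam ^ 2 := Real.sq_sqrt (by positivity)
  have hsnn : 0 ≤ s := Real.sqrt_nonneg _
  have hsl : lam < s := by nlinarith
  have hspos : 0 < s := lt_trans hlam hsl
  have hpos : 0 < s + lam := by linarith
  set a := Real.log (s + lam) with ha
  have hexp : Real.exp a = s + lam := Real.exp_log hpos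
  have hexpneg : Real.exp (-a) = s - lam := by
    rw [Real.exp_neg, hexp, inv_eq_one_div, eq_comm, eq_div_iff hpos.ne']
    nlinarith
  have hcpos : 0 < Real.sqrt (s / lam) := Real.sqrt_pos.mpr (by positivity)
  have hc := hcpos.ne'
  rcases lt_trichotomy x 0 with hx | hx | hx
  · have h1 : ((|x - 1| : ℤ) : ℝ) = -(x : ℝ) + 1 := by
      rw [abs_of_nonpos (by omega)]; push_cast; ring
    have h2 : ((|x + 1| : ℤ) : ℝ) = -(x : ℝ) - 1 := by
      rw [abs_of_nonpos (by omega)]; push_cast; ring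
    have h3 : ((|x| : ℤ) : ℝ) = -(x : ℝ) := by
      rw [abs_of_nonpos (by omega)]; push_cast; ring
    rw [if_neg (by omega), h1, h2, h3,
      show -a * (-(x:ℝ) + 1) = a * (x:ℝ) + (-a) by ring,
      show -a * (-(x:ℝ) - 1) = a * (x:ℝ) + a by ring,
      show -a * (-(x:ℝ)) = a * (x:ℝ) by ring,
      Real.exp_add, Real.exp_add, hexp, hexpneg]
    field_simp
    ring
  · subst hx
    norm_num
    rw [hexpneg]
    field_simp
    ring
  · have h1 : ((|x - 1| : ℤ) : ℝ) = (x : ℝ) - 1 := by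
      rw [abs_of_nonneg (by omega)]; push_cast; ring
    have h2 : ((|x + 1| : ℤ) : ℝ) = (x : ℝ) + 1 := by
      rw [abs_of_nonneg (by omega)]; push_cast; ring
    have h3 : ((|x| : ℤ) : ℝ) = (x : ℝ) := by
      rw [abs_of_nonneg (by omega)]
    rw [if_neg (by omega), h1, h2, h3,
      show -a * ((x:ℝ) - 1) = -a * (x:ℝ) + a by ring,
      show -a * ((x:ℝ) + 1) = -a * (x:ℝ) + (-a) by ring,
      Real.exp_add, Real.exp_add, hexp, hexpneg]
    field_simp
    ring
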